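/- For every natural number $k > 0$ there is a constant $c$ such that for all $S \ge 1$ and $T > 0$, the number of finite-index subgroups $L \subseteq \mathbb{Z}^k$ with $[\mathbb{Z}^k:L] \le T^k$ and containing a nonzero vector of Euclidean length at most $T/S$ is at most $c\, S^{-k} T^{k^2}$. -/

import Mathlib

open Set

lemma cover_ncard {α β : Type*} {s : Set α} {t : Set β} {g : β → Set α}
    (ht : t.Finite) (hcov : s ⊆ ⋃ b ∈ t, g b)
    (hg : ∀ b ∈ t, (g b).Finite) {K : ℝ} (hK : ∀ b ∈ t, ((g b).ncard : ℝ) ≤ K) :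
    s.Finite ∧ ((s.ncard : ℝ)) ≤ t.ncard * K := by
  classical
  have hs : s.Finite := Set.Finite.subset (ht.biUnion hg) hcov
  refine ⟨hs, ?_⟩
  set F : β → Finset α := fun b => if h : b ∈ t then (hg b h).toFinset else ∅ with hF
  have hsub : hs.toFinset ⊆ ht.toFinset.biUnion F := by
    intro x hx
    rw [Set.Finite.mem_toFinset] at hx
    obtain ⟨b, hb, hxb⟩ := by simpa using hcov hx
    refine Finset.mem_biUnion.2 ⟨b, ht.mem_toFinset.2 hb, ?_⟩
    simp [hF, hb, Set.Finite.mem_toFinset, hxb]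
  have h1 : s.ncard ≤ ∑ b ∈ ht.toFinset, (F b).card :=
    (Set.ncard_eq_toFinset_card s hs).le.trans
      ((Finset.card_le_card hsub).trans (Finset.card_biUnion_le))
  have h2 : (s.ncard : ℝ) ≤ ∑ b ∈ ht.toFinset, ((F b).card : ℝ) := by
    exact_mod_cast (Nat.cast_le.2 h1).trans_eq (by push_cast; ring)
  refine h2.trans ?_
  have h3 : ∀ b ∈ ht.toFinset, ((F b).card : ℝ) ≤ K := by
    intro b hb
    have hbt : b ∈ t := ht.mem_toFinset.1 hb
    have : (F b).card = (g b).ncard := by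
      simp [hF, hbt, Set.ncard_eq_toFinset_card _ (hg b hbt)]
    rw [this]; exact hK b hbt
  calc ∑ b ∈ ht.toFinset, ((F b).card : ℝ) ≤ ∑ b ∈ ht.toFinset, K := Finset.sum_le_sum h3
    _ = ht.toFinset.card * K := by rw [Finset.sum_const, nsmul_eq_mul]
    _ = t.ncard * K := by rw [Set.ncard_eq_toFinset_card _ ht]

open AddSubgroup

lemma index_lower (m : ℕ) (u₀ : Fin (m+1) → ℤ)
    (π : (Fin (m+1) → ℤ) →+ (Fin m → ℤ)) (hπs : Function.Surjective π)
    (hu0 : π u₀ = 0) (a : ℤ) (ha : a ≠ 0)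
    (L : AddSubgroup (Fin (m+1) → ℤ)) (hL : 0 < L.index)
    (hP : ∀ n : ℤ, n • u₀ ∈ L ↔ a ∣ n) :
    0 < (AddSubgroup.map π L).index ∧ (AddSubgroup.map π L).index * a.natAbs ≤ L.index := by
  have hfin : Finite ((Fin (m+1) → ℤ) ⧸ L) := by
    have h := hL
    rw [AddSubgroup.index_eq_card] at h
    exact (Nat.card_pos_iff.mp h).2
  have hle : L ≤ (AddSubgroup.map π L).comap π :=
    fun x hx => AddSubgroup.mem_comap.2 (AddSubgroup.mem_map_of_mem _ hx)
  set q := QuotientAddGroup.map L (AddSubgroup.map π L) π hle with hq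
  have hqs : Function.Surjective q := by
    intro y
    induction y using QuotientAddGroup.induction_on with
    | H z =>
      obtain ⟨x, rfl⟩ := hπs z
      exact ⟨QuotientAddGroup.mk x, rfl⟩
  have hcard : L.index = (AddSubgroup.map π L).index * Nat.card q.ker := by
    rw [AddSubgroup.index_eq_card, AddSubgroup.index_eq_card,
      AddSubgroup.card_eq_card_quotient_mul_card_addSubgroup q.ker]
    congr 1
    exact Nat.card_congr (QuotientAddGroup.quotientKerEquivOfSurjective q hqs).toEquiv
  have hmem : ∀ j : ℤ, (QuotientAddGroup.mk (j • u₀) : _ ⧸ L) ∈ q.ker := by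
    intro j
    rw [AddMonoidHom.mem_ker, hq, QuotientAddGroup.map_mk, map_zsmul, hu0, smul_zero]
    rfl
  set d := a.natAbs with hdd
  have hd : d ≤ Nat.card q.ker := by
    have hinj : Function.Injective (fun j : Fin d => (⟨_, hmem (j : ℤ)⟩ : q.ker)) := by
      intro j j' h
      simp only [Subtype.mk_eq_mk] at h
      have h2 : -((j : ℤ) • u₀) + (j' : ℤ) • u₀ ∈ L := (QuotientAddGroup.eq).mp h
      have h3 : ((j' : ℤ) - (j : ℤ)) • u₀ ∈ L := by
        rwa [sub_smul, sub_eq_neg_add]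
      have h4 : a ∣ ((j' : ℤ) - (j : ℤ)) := (hP _).mp h3
      have h5 : ((j' : ℤ) - (j : ℤ)) = 0 := by
        refine Int.eq_zero_of_abs_lt_dvd ((abs_dvd _ _).2 h4) ?_
        have hj : (j : ℤ) < d := by exact_mod_cast j.2
        have hj' : (j' : ℤ) < d := by exact_mod_cast j'.2
        have hj0 : 0 ≤ (j : ℤ) := Int.natCast_nonneg _
        have hj'0 : 0 ≤ (j' : ℤ) := Int.natCast_nonneg _
        have : |((j' : ℤ) - (j : ℤ))| < d := abs_sub_lt_iff.2 ⟨by omega, by omega⟩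
        calc |((j' : ℤ) - (j : ℤ))| < (d : ℤ) := this
          _ ≤ |a| := by rw [Int.abs_eq_natAbs]
      have : (j' : ℤ) = (j : ℤ) := by omega
      exact (Fin.ext (by exact_mod_cast this)).symm
    calc d = Nat.card (Fin d) := by simp
      _ ≤ Nat.card q.ker := Nat.card_le_card_of_injective _ hinj
  constructor
  · rcases Nat.eq_zero_or_pos (AddSubgroup.map π L).index with h | h
    · rw [hcard, h, zero_mul] at hL; omega
    · exact h
  · calc (AddSubgroup.map π L).index * d ≤ (AddSubgroup.map π L).index * Nat.card q.ker :=
        Nat.mul_le_mul_left _ hd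
      _ = L.index := hcard.symm

open AddSubgroup

lemma inj_ncard {α β : Type*} [Finite β] {s : Set α} (f : α → β) (hf : Set.InjOn f s) :
    s.Finite ∧ s.ncard ≤ Nat.card β := by
  have h1 : (f '' s).Finite := Set.toFinite _
  have hs : s.Finite := Set.Finite.of_finite_image h1 hf
  refine ⟨hs, ?_⟩
  rw [← Set.ncard_image_of_injOn hf]
  exact le_trans (Set.ncard_le_ncard (Set.subset_univ _) Set.finite_univ)
    (le_of_eq (Set.ncard_univ _))

lemma fiber_count (m : ℕ) (u₀ : Fin (m+1) → ℤ) (r : (Fin (m+1) → ℤ) →+ ℤ)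
    (π : (Fin (m+1) → ℤ) →+ (Fin m → ℤ))
    (hker : ∀ x, π x = 0 ↔ ∃ n : ℤ, x = n • u₀)
    (hr : r u₀ = 1) (a : ℤ) (ha : a ≠ 0)
    (L' : AddSubgroup (Fin m → ℤ)) :
    ({L : AddSubgroup (Fin (m+1) → ℤ) |
        (∀ n : ℤ, n • u₀ ∈ L ↔ a ∣ n) ∧ AddSubgroup.map π L = L'}).Finite ∧
    (({L : AddSubgroup (Fin (m+1) → ℤ) |
        (∀ n : ℤ, n • u₀ ∈ L ↔ a ∣ n) ∧ AddSubgroup.map π L = L'}).ncard : ℝ) ≤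
      (a.natAbs : ℝ) ^ m := by
  classical
  set d := a.natAbs with hdd
  have hd0 : 0 < d := Int.natAbs_pos.2 ha
  haveI : NeZero d := ⟨hd0.ne'⟩
  obtain ⟨n, bas⟩ := Submodule.basisOfPid (Pi.basisFun ℤ (Fin m)) (AddSubgroup.toIntSubmodule L')
  have hnm : n ≤ m := by
    have hli : LinearIndependent ℤ (fun i => ((bas i : Fin m → ℤ))) := by
      exact bas.linearIndependent.map' (Submodule.subtype _) (Submodule.ker_subtype _)
    have := hli.fintype_card_le_finrank
    simpa [Module.finrank_pi] using this
  set c : AddSubgroup (Fin (m+1) → ℤ) → (Fin n → ZMod d) := fun L i =>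
    if h : ∃ y, y ∈ L ∧ π y = (bas i : Fin m → ℤ) then ((r h.choose : ℤ) : ZMod d) else 0
    with hc
  set B : Set (AddSubgroup (Fin (m+1) → ℤ)) :=
    {L | (∀ n : ℤ, n • u₀ ∈ L ↔ a ∣ n) ∧ AddSubgroup.map π L = L'} with hB
  have hmono : ∀ L₁ ∈ B, ∀ L₂ ∈ B, c L₁ = c L₂ → L₁ ≤ L₂ := by
    intro L₁ h₁ L₂ h₂ hcc y hy
    obtain ⟨hP₁, hm₁⟩ := h₁
    obtain ⟨hP₂, hm₂⟩ := h₂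
    have hEx : ∀ (L : AddSubgroup (Fin (m+1) → ℤ)), AddSubgroup.map π L = L' →
        ∀ i, ∃ z, z ∈ L ∧ π z = (bas i : Fin m → ℤ) := by
      intro L hm i
      have : ((bas i : Fin m → ℤ)) ∈ AddSubgroup.map π L := by
        rw [hm]
        exact (bas i).2
      obtain ⟨z, hz, hπz⟩ := this
      exact ⟨z, hz, hπz⟩
    have hE1 := hEx L₁ hm₁
    have hE2 := hEx L₂ hm₂
    set y₁ : Fin n → (Fin (m+1) → ℤ) := fun i => (hE1 i).choose with hy₁
    set y₂ : Fin n → (Fin (m+1) → ℤ) := fun i => (hE2 i).choose with hy₂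
    have hy₁s : ∀ i, y₁ i ∈ L₁ ∧ π (y₁ i) = (bas i : Fin m → ℤ) := fun i => (hE1 i).choose_spec
    have hy₂s : ∀ i, y₂ i ∈ L₂ ∧ π (y₂ i) = (bas i : Fin m → ℤ) := fun i => (hE2 i).choose_spec
    -- the coefficients of π y in the basis
    have hyL' : π y ∈ AddSubgroup.toIntSubmodule L' := by
      show π y ∈ L'
      rw [← hm₁]
      exact AddSubgroup.mem_map_of_mem _ hy
    set t : Fin n → ℤ := fun i => bas.repr ⟨π y, hyL'⟩ i with ht
    have hrepr : π y = ∑ i, t i • (bas i : Fin m → ℤ) := by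
      have := bas.sum_repr ⟨π y, hyL'⟩
      have h2 := congrArg (Submodule.subtype _) this
      simp only [map_sum, map_smul, Submodule.coe_subtype] at h2 ⊢
      exact h2.symm
    set z₁ : Fin (m+1) → ℤ := ∑ i, t i • y₁ i with hz₁
    set z₂ : Fin (m+1) → ℤ := ∑ i, t i • y₂ i with hz₂
    have hz₁L : z₁ ∈ L₁ := AddSubgroup.sum_mem _ (fun i _ => AddSubgroup.zsmul_mem _ (hy₁s i).1 _)
    have hz₂L : z₂ ∈ L₂ := AddSubgroup.sum_mem _ (fun i _ => AddSubgroup.zsmul_mem _ (hy₂s i).1 _)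
    have hπz₁ : π z₁ = π y := by
      rw [hz₁, map_sum, hrepr]
      congr 1; funext i
      rw [map_zsmul, (hy₁s i).2]
    have hπz₂ : π z₂ = π y := by
      rw [hz₂, map_sum, hrepr]
      congr 1; funext i
      rw [map_zsmul, (hy₂s i).2]
    -- y - z₁ is a multiple of u₀
    obtain ⟨n₁, hn₁⟩ : ∃ n₁ : ℤ, y - z₁ = n₁ • u₀ := by
      rw [← hker]; rw [map_sub, hπz₁, sub_self]
    have hadv : a ∣ n₁ := by
      rw [← hP₁]
      rw [← hn₁]
      exact AddSubgroup.sub_mem _ hy hz₁L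
    -- z₁ - z₂ is a multiple of u₀
    obtain ⟨s, hs⟩ : ∃ s : ℤ, z₁ - z₂ = s • u₀ := by
      rw [← hker]; rw [map_sub, hπz₁, hπz₂, sub_self]
    have hrs : r z₁ - r z₂ = s := by
      have := congrArg r hs
      rw [map_sub, map_zsmul, hr, smul_eq_mul, mul_one] at this
      exact this
    -- a divides s using equality of c-values
    have hads : a ∣ s := by
      rw [← hrs]
      have : r z₁ - r z₂ = ∑ i, t i * (r (y₁ i) - r (y₂ i)) := by
        rw [hz₁, hz₂, map_sum, map_sum, ← Finset.sum_sub_distrib]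
        congr 1; funext i
        rw [map_zsmul, map_zsmul, smul_eq_mul, smul_eq_mul, mul_sub]
      rw [this]
      refine Finset.dvd_sum (fun i _ => Dvd.dvd.mul_left ?_ _)
      -- a ∣ r (y₁ i) - r (y₂ i)
      have hci := congrFun hcc i
      rw [hc] at hci
      simp only at hci
      rw [dif_pos (hE1 i), dif_pos (hE2 i)] at hci
      have hdvd : (d : ℤ) ∣ (r (y₁ i) - r (y₂ i)) := by
        have h1 : ((r (y₁ i) : ℤ) : ZMod d) = ((r (y₂ i) : ℤ) : ZMod d) := hci
        have h2 : r (y₁ i) ≡ r (y₂ i) [ZMOD (d : ℕ)] := (ZMod.intCast_eq_intCast_iff _ _ _).mp h1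
        exact dvd_sub_comm.mp (Int.ModEq.dvd h2)
      rw [hdd] at hdvd
      rwa [Int.natCast_natAbs, abs_dvd] at hdvd
    -- conclude
    have h1 : n₁ • u₀ ∈ L₂ := (hP₂ n₁).mpr hadv
    have h2 : s • u₀ ∈ L₂ := (hP₂ s).mpr hads
    have : y = (y - z₁) + (z₁ - z₂) + z₂ := by ring
    rw [this, hn₁, hs]
    exact AddSubgroup.add_mem _ (AddSubgroup.add_mem _ h1 h2) hz₂L
  have hinj : Set.InjOn c B := by
    intro L₁ h₁ L₂ h₂ hcc
    exact le_antisymm (hmono L₁ h₁ L₂ h₂ hcc) (hmono L₂ h₂ L₁ h₁ hcc.symm)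
  obtain ⟨hfin, hcard⟩ := inj_ncard c hinj
  refine ⟨hfin, ?_⟩
  have : Nat.card (Fin n → ZMod d) = d ^ n := by
    rw [Nat.card_pi]
    simp [Nat.card_zmod]
  calc (Set.ncard B : ℝ) ≤ (Nat.card (Fin n → ZMod d) : ℝ) := by exact_mod_cast hcard
    _ = (d : ℝ) ^ n := by rw [this]; push_cast; ring
    _ ≤ (d : ℝ) ^ m := by
      apply pow_le_pow_right₀ _ hnm
      exact_mod_cast hd0
def cset (m N : ℕ) : Set (AddSubgroup (Fin m → ℤ)) := {L | 0 < L.index ∧ L.index ≤ N}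

lemma key (m : ℕ)
    (ih : ∀ N : ℕ, (cset m N).Finite ∧ ((cset m N).ncard : ℝ) ≤ (N:ℝ)^m)
    (u₀ : Fin (m+1) → ℤ) (r : (Fin (m+1) → ℤ) →+ ℤ)
    (π : (Fin (m+1) → ℤ) →+ (Fin m → ℤ)) (hπs : Function.Surjective π)
    (hker : ∀ x, π x = 0 ↔ ∃ n : ℤ, x = n • u₀)
    (hr : r u₀ = 1) (a : ℤ) (ha : a ≠ 0) (N : ℕ) :
    ({L : AddSubgroup (Fin (m+1) → ℤ) | 0 < L.index ∧ L.index ≤ N ∧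
       ∀ n : ℤ, n • u₀ ∈ L ↔ a ∣ n}).Finite ∧
    (({L : AddSubgroup (Fin (m+1) → ℤ) | 0 < L.index ∧ L.index ≤ N ∧
       ∀ n : ℤ, n • u₀ ∈ L ↔ a ∣ n}).ncard : ℝ) ≤ (N:ℝ)^m := by
  have hd0 : 0 < a.natAbs := Int.natAbs_pos.2 ha
  have hu0 : π u₀ = 0 := (hker u₀).mpr ⟨1, (one_smul ℤ u₀).symm⟩
  have hcov : {L : AddSubgroup (Fin (m+1) → ℤ) | 0 < L.index ∧ L.index ≤ N ∧
       ∀ n : ℤ, n • u₀ ∈ L ↔ a ∣ n} ⊆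
      ⋃ L' ∈ cset m (N / a.natAbs),
        {L | (∀ n : ℤ, n • u₀ ∈ L ↔ a ∣ n) ∧ AddSubgroup.map π L = L'} := by
    intro L hL
    obtain ⟨h1, h2, h3⟩ := hL
    obtain ⟨hi1, hi2⟩ := index_lower m u₀ π hπs hu0 a ha L h1 h3
    refine Set.mem_biUnion (s := cset m (N / a.natAbs)) ⟨hi1, ?_⟩ ⟨h3, rfl⟩
    rw [Nat.le_div_iff_mul_le hd0]
    exact le_trans hi2 h2
  obtain ⟨hfin, hcard⟩ := cover_ncard (ih (N / a.natAbs)).1 hcov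
    (fun L' _ => (fiber_count m u₀ r π hker hr a ha L').1)
    (fun L' _ => (fiber_count m u₀ r π hker hr a ha L').2)
  refine ⟨hfin, hcard.trans ?_⟩
  have h1 : ((cset m (N / a.natAbs)).ncard : ℝ) ≤ ((N / a.natAbs : ℕ) : ℝ)^m := (ih _).2
  calc ((cset m (N / a.natAbs)).ncard : ℝ) * (a.natAbs : ℝ)^m
      ≤ ((N / a.natAbs : ℕ):ℝ)^m * (a.natAbs:ℝ)^m :=
        mul_le_mul_of_nonneg_right h1 (by positivity)
    _ = (((N / a.natAbs) * a.natAbs : ℕ) : ℝ)^m := by push_cast; ring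
    _ ≤ (N:ℝ)^m := by
        gcongr
        exact_mod_cast Nat.div_mul_le_self N a.natAbs

lemma cnt (m : ℕ) : ∀ N : ℕ, (cset m N).Finite ∧ ((cset m N).ncard : ℝ) ≤ (N:ℝ)^m := by
  induction m with
  | zero =>
    intro N
    haveI hsub : Subsingleton (AddSubgroup (Fin 0 → ℤ)) := by
      constructor
      intro L1 L2
      ext x
      have hx : x = 0 := Subsingleton.elim x 0
      rw [hx]
      exact ⟨fun _ => L2.zero_mem, fun _ => L1.zero_mem⟩
    haveI : Unique (AddSubgroup (Fin 0 → ℤ)) := uniqueOfSubsingleton ⊥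
    refine ⟨Set.toFinite _, ?_⟩
    have h1 : (cset 0 N).ncard ≤ 1 := by
      have := Set.ncard_le_ncard (Set.subset_univ (cset 0 N)) Set.finite_univ
      rwa [Set.ncard_univ, Nat.card_unique] at this
    calc ((cset 0 N).ncard : ℝ) ≤ 1 := by exact_mod_cast h1
      _ = (N:ℝ)^0 := by rw [pow_zero]
  | succ m ih =>
    intro N
    set e0 : Fin (m+1) → ℤ := Pi.single 0 1 with he0
    set r : (Fin (m+1) → ℤ) →+ ℤ := Pi.evalAddMonoidHom (fun _ => ℤ) 0 with hrdef
    set π : (Fin (m+1) → ℤ) →+ (Fin m → ℤ) :=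
      AddMonoidHom.mk' (fun x => x ∘ Fin.succ) (fun x y => rfl) with hπdef
    have hπs : Function.Surjective π := by
      intro z
      exact ⟨Fin.cons 0 z, funext fun i => by simp [hπdef, Fin.cons_succ]⟩
    have hker : ∀ x : Fin (m+1) → ℤ, π x = 0 ↔ ∃ n : ℤ, x = n • e0 := by
      intro x
      constructor
      · intro h
        refine ⟨x 0, ?_⟩
        funext i
        induction i using Fin.cases with
        | zero => simp [he0, Pi.single_eq_same]
        | succ j =>
          have hj : x (Fin.succ j) = 0 := congrFun h j
          simp [he0, Pi.single_eq_of_ne (Fin.succ_ne_zero j), hj]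
      · rintro ⟨n, rfl⟩
        funext j
        show (n • e0) (Fin.succ j) = 0
        simp [he0, Pi.single_eq_of_ne (Fin.succ_ne_zero j)]
    have hr : r e0 = 1 := by simp [hrdef, he0, Pi.single_eq_same]
    have hcov : cset (m+1) N ⊆
        ⋃ b ∈ (↑(Finset.Icc 1 N) : Set ℕ),
          {L : AddSubgroup (Fin (m+1) → ℤ) | 0 < L.index ∧ L.index ≤ N ∧
            ∀ n : ℤ, n • e0 ∈ L ↔ ((b:ℤ)) ∣ n} := by
      intro L hL
      obtain ⟨h1, h2⟩ := hL
      set I0 : AddSubgroup ℤ := AddSubgroup.comap (zmultiplesHom _ e0) L with hI0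
      set I : Submodule ℤ ℤ := AddSubgroup.toIntSubmodule I0 with hI
      have hmemI : ∀ n : ℤ, n ∈ I ↔ n • e0 ∈ L := fun n => Iff.rfl
      have hgen := Submodule.IsPrincipal.span_singleton_generator I
      set gI := Submodule.IsPrincipal.generator I with hgI
      have hdvdI : ∀ n : ℤ, n ∈ I ↔ gI ∣ n := by
        intro n
        rw [← hgen, Submodule.mem_span_singleton]
        constructor
        · rintro ⟨c, hc⟩; exact ⟨c, by rw [← hc, smul_eq_mul, mul_comm]⟩
        · rintro ⟨c, rfl⟩; exact ⟨c, by rw [smul_eq_mul, mul_comm]⟩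
      have hidx : (L.index : ℤ) ∈ I := by
        rw [hmemI, natCast_zsmul]
        exact AddSubgroup.nsmul_index_mem L e0
      have hgne : gI ≠ 0 := by
        intro h0
        rw [hdvdI, h0] at hidx
        have : (L.index : ℤ) = 0 := zero_dvd_iff.mp hidx
        omega
      set b := gI.natAbs with hb
      have hb1 : 1 ≤ b := Int.natAbs_pos.2 hgne
      have hbdvd : b ∣ L.index := by
        have h4 : gI ∣ (L.index : ℤ) := (hdvdI _).mp hidx
        have h5 : gI.natAbs ∣ ((L.index : ℤ)).natAbs := Int.natAbs_dvd_natAbs.mpr h4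
        rwa [Int.natAbs_natCast] at h5
      have hbN : b ≤ N := le_trans (Nat.le_of_dvd h1 hbdvd) h2
      have hmem1 : b ∈ (↑(Finset.Icc 1 N) : Set ℕ) :=
        Finset.mem_coe.2 (Finset.mem_Icc.2 ⟨hb1, hbN⟩)
      have hmem2 : L ∈ {L : AddSubgroup (Fin (m+1) → ℤ) | 0 < L.index ∧ L.index ≤ N ∧
          ∀ n : ℤ, n • e0 ∈ L ↔ ((b:ℤ)) ∣ n} := by
        refine ⟨h1, h2, fun n => ?_⟩
        rw [← hmemI, hdvdI, hb]
        exact (Int.natAbs_dvd).symm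
      exact Set.mem_biUnion hmem1 hmem2
    obtain ⟨hfin, hcard⟩ := cover_ncard (Finset.finite_toSet _) hcov
      (fun b hb => (key m ih e0 r π hπs hker hr (b:ℤ)
        (by
          have : 1 ≤ b := (Finset.mem_Icc.1 (Finset.mem_coe.1 hb)).1
          exact_mod_cast Nat.one_le_iff_ne_zero.mp this) N).1)
      (fun b hb => (key m ih e0 r π hπs hker hr (b:ℤ)
        (by
          have : 1 ≤ b := (Finset.mem_Icc.1 (Finset.mem_coe.1 hb)).1
          exact_mod_cast Nat.one_le_iff_ne_zero.mp this) N).2)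
    refine ⟨hfin, hcard.trans ?_⟩
    have hc2 : (((↑(Finset.Icc 1 N) : Set ℕ)).ncard : ℝ) = (N : ℝ) := by
      rw [Set.ncard_coe_finset, Nat.card_Icc]
      norm_num
    rw [hc2]
    exact le_of_eq (by rw [pow_succ'])

lemma straighten (m : ℕ) (u : Fin (m+1) → ℤ) (hu : u ≠ 0) :
    ∃ (u₀ : Fin (m+1) → ℤ) (c : ℤ) (r : (Fin (m+1) → ℤ) →+ ℤ)
      (π : (Fin (m+1) → ℤ) →+ (Fin m → ℤ)),
      c ≠ 0 ∧ u = c • u₀ ∧ Function.Surjective π ∧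
      (∀ x, π x = 0 ↔ ∃ n : ℤ, x = n • u₀) ∧ r u₀ = 1 := by
  classical
  set J : Ideal ℤ := Ideal.span (Set.range u) with hJ
  have hgen := Submodule.IsPrincipal.span_singleton_generator J
  set g : ℤ := Submodule.IsPrincipal.generator J with hg
  have hgdvd : ∀ i, g ∣ u i := by
    intro i
    have hmem : u i ∈ J := Ideal.subset_span ⟨i, rfl⟩
    rw [← hgen, Submodule.mem_span_singleton] at hmem
    obtain ⟨c, hc⟩ := hmem
    exact ⟨c, by rw [← hc, smul_eq_mul, mul_comm]⟩
  have hgne : g ≠ 0 := by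
    intro h0
    apply hu
    funext i
    have := hgdvd i
    rw [h0] at this
    exact zero_dvd_iff.mp this
  obtain ⟨w, hw⟩ : ∃ w : Fin (m+1) → ℤ, ∑ i, w i • u i = g := by
    have hmem : g ∈ J := Submodule.IsPrincipal.generator_mem J
    rw [hJ] at hmem
    exact (Submodule.mem_span_range_iff_exists_fun ℤ).mp hmem
  set u₀ : Fin (m+1) → ℤ := fun i => u i / g with hu₀
  have hgu₀ : ∀ i, g * u₀ i = u i := fun i => Int.mul_ediv_cancel' (hgdvd i)
  have hueq : u = g • u₀ := by
    funext i
    rw [Pi.smul_apply, smul_eq_mul, hgu₀]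
  -- the retraction rL
  set rL : (Fin (m+1) → ℤ) →ₗ[ℤ] ℤ := ∑ i, w i • LinearMap.proj i with hrL
  have hrLa : ∀ x, rL x = ∑ i, w i * x i := by
    intro x
    rw [hrL]
    simp [LinearMap.proj_apply, smul_eq_mul]
  have hru₀ : rL u₀ = 1 := by
    have h1 : g * rL u₀ = g := by
      rw [hrLa]
      calc g * ∑ i, w i * u₀ i = ∑ i, w i * (g * u₀ i) := by
            rw [Finset.mul_sum]; congr 1; funext i; ring
        _ = ∑ i, w i * u i := by simp_rw [hgu₀]
        _ = g := by simpa [smul_eq_mul] using hw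
    exact mul_left_cancel₀ hgne (h1.trans (mul_one g).symm)
  set M : Submodule ℤ (Fin (m+1) → ℤ) := LinearMap.ker rL with hM
  have hmemM : ∀ x : Fin (m+1) → ℤ, x - rL x • u₀ ∈ M := by
    intro x
    simp only [hM, LinearMap.mem_ker, map_sub, map_smul, smul_eq_mul, hru₀, mul_one, sub_self]
  set pfull : (Fin (m+1) → ℤ) →ₗ[ℤ] (Fin (m+1) → ℤ) :=
    LinearMap.id - rL.smulRight u₀ with hpfull
  have hpfa : ∀ x, pfull x = x - rL x • u₀ := by
    intro x
    rw [hpfull]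
    simp
  set p : (Fin (m+1) → ℤ) →ₗ[ℤ] M := pfull.codRestrict M (fun x => by
    rw [hpfa]; exact hmemM x) with hpdef
  have hpa : ∀ x, (p x : Fin (m+1) → ℤ) = x - rL x • u₀ := by
    intro x
    rw [hpdef, LinearMap.codRestrict_apply, hpfa]
  have hpM : ∀ z : M, p (z : Fin (m+1) → ℤ) = z := by
    intro z
    ext
    rw [hpa]
    have : rL (z : Fin (m+1) → ℤ) = 0 := z.2
    rw [this, zero_smul, sub_zero]
  -- the equivalence with ℤ × M
  set F : (Fin (m+1) → ℤ) →ₗ[ℤ] ℤ × M := LinearMap.prod rL p with hF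
  set G : ℤ × M →ₗ[ℤ] (Fin (m+1) → ℤ) :=
    (LinearMap.fst ℤ ℤ M).smulRight u₀ + M.subtype.comp (LinearMap.snd ℤ ℤ M) with hG
  have hGa : ∀ t : ℤ, ∀ z : M, G (t, z) = t • u₀ + (z : Fin (m+1) → ℤ) := by
    intro t z
    rw [hG]
    simp
  have hGF : ∀ x, G (F x) = x := by
    intro x
    rw [hF, LinearMap.prod_apply]
    show G (rL x, p x) = x
    rw [hGa, hpa]
    ring
  have hFG : ∀ tz : ℤ × M, F (G tz) = tz := by
    rintro ⟨t, z⟩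
    rw [hGa, hF, LinearMap.prod_apply]
    have h1 : rL (t • u₀ + (z : Fin (m+1) → ℤ)) = t := by
      rw [map_add, map_smul, hru₀]
      have : rL (z : Fin (m+1) → ℤ) = 0 := z.2
      rw [this, add_zero, smul_eq_mul, mul_one]
    have h2 : p (t • u₀ + (z : Fin (m+1) → ℤ)) = z := by
      ext i
      rw [hpa, h1]
      have hxy : t • u₀ + (z : Fin (m+1) → ℤ) - t • u₀ = (z : Fin (m+1) → ℤ) := by abel
      rw [hxy]
    show (rL _, p _) = (t, z)
    rw [h1, h2]
  have hE : Nonempty ((Fin (m+1) → ℤ) ≃ₗ[ℤ] ℤ × M) :=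
    ⟨LinearEquiv.ofLinear F G (LinearMap.ext hFG) (LinearMap.ext hGF)⟩
  obtain ⟨E⟩ := hE
  have hfr : Module.finrank ℤ M = m := by
    have h1 : Module.finrank ℤ (Fin (m+1) → ℤ) = m + 1 := by
      simp [Module.finrank_pi]
    have h2 : Module.finrank ℤ (ℤ × M) = 1 + Module.finrank ℤ M := by
      rw [Module.finrank_prod, Module.finrank_self]
    have h3 := E.finrank_eq
    omega
  set bm : Module.Basis (Fin m) ℤ M := (Module.finBasis ℤ M).reindex (finCongr hfr) with hbm
  set πL : (Fin (m+1) → ℤ) →ₗ[ℤ] (Fin m → ℤ) := bm.equivFun.toLinearMap.comp p with hπL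
  have hπLa : ∀ x, πL x = bm.equivFun (p x) := fun x => rfl
  refine ⟨u₀, g, rL.toAddMonoidHom, πL.toAddMonoidHom, hgne, hueq, ?_, ?_, hru₀⟩
  · intro z
    refine ⟨((bm.equivFun.symm z : M) : Fin (m+1) → ℤ), ?_⟩
    show πL _ = z
    rw [hπLa, hpM, LinearEquiv.apply_symm_apply]
  · intro x
    constructor
    · intro h
      have h0 : πL x = 0 := h
      rw [hπLa] at h0
      have h1 : p x = 0 := by
        rwa [LinearEquiv.map_eq_zero_iff] at h0
      have h2 : (p x : Fin (m+1) → ℤ) = 0 := by rw [h1]; rfl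
      rw [hpa] at h2
      exact ⟨rL x, (sub_eq_zero.mp h2)⟩
    · rintro ⟨n, rfl⟩
      show πL _ = 0
      rw [hπLa]
      have h1 : p (n • u₀) = 0 := by
        ext i
        rw [hpa, map_smul, smul_eq_mul, hru₀, mul_one]
        show ((n • u₀) - n • u₀) i = _
        rw [sub_self]
        rfl
      rw [h1, map_zero]
def SatC {k : ℕ} (u : Fin k → ℤ) (L : AddSubgroup (Fin k → ℤ)) : Prop :=
  ∀ x ∈ L, ∀ n c : ℤ, n ≠ 0 → n • x = c • u → ∃ t : ℤ, x = t • u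

lemma countB (m : ℕ) (u : Fin (m+1) → ℤ) (hu : u ≠ 0) (N : ℕ) :
    ({L : AddSubgroup (Fin (m+1) → ℤ) | 0 < L.index ∧ L.index ≤ N ∧ u ∈ L ∧ SatC u L}).Finite ∧
    (({L : AddSubgroup (Fin (m+1) → ℤ) | 0 < L.index ∧ L.index ≤ N ∧ u ∈ L ∧
        SatC u L}).ncard : ℝ) ≤ (N:ℝ)^m := by
  obtain ⟨u₀, c, r, π, hc, hucu, hπs, hker, hr⟩ := straighten m u hu
  have hset : {L : AddSubgroup (Fin (m+1) → ℤ) | 0 < L.index ∧ L.index ≤ N ∧ u ∈ L ∧ SatC u L}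
      = {L : AddSubgroup (Fin (m+1) → ℤ) | 0 < L.index ∧ L.index ≤ N ∧
          ∀ n : ℤ, n • u₀ ∈ L ↔ c ∣ n} := by
    ext L
    simp only [Set.mem_setOf_eq]
    refine and_congr_right (fun _ => and_congr_right (fun _ => ?_))
    constructor
    · rintro ⟨huL, hsat⟩ n
      constructor
      · intro hnL
        have hdep : c • (n • u₀) = n • u := by rw [hucu, smul_comm]
        obtain ⟨t, ht⟩ := hsat (n • u₀) hnL c n hc hdep
        have h1 : n • u₀ = (t * c) • u₀ := by rw [ht, hucu, mul_smul]
        have h2 : n = t * c := by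
          have := congrArg r h1
          rwa [map_zsmul, map_zsmul, smul_eq_mul, smul_eq_mul, hr, mul_one, mul_one] at this
        exact ⟨t, by rw [h2, mul_comm]⟩
      · rintro ⟨t, rfl⟩
        have : (c * t) • u₀ = t • u := by rw [hucu, mul_comm, mul_smul]
        rw [this]
        exact AddSubgroup.zsmul_mem L huL t
    · intro hP
      have huL : u ∈ L := by rw [hucu]; exact (hP c).mpr dvd_rfl
      refine ⟨huL, ?_⟩
      intro x hx n c' hn hnx
      have h1 : n • x = (c' * c) • u₀ := by rw [hnx, hucu, mul_smul]
      have h2 : n * r x = c' * c := by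
        have := congrArg r h1
        rwa [map_zsmul, map_zsmul, smul_eq_mul, smul_eq_mul, hr, mul_one] at this
      have h3 : x = r x • u₀ := by
        funext i
        have h4 := congrFun h1 i
        simp only [Pi.smul_apply, smul_eq_mul] at h4 ⊢
        have h5 : n * x i = n * (r x * u₀ i) := by rw [h4, ← h2]; ring
        exact mul_left_cancel₀ hn h5
      have h6 : c ∣ r x := by
        refine (hP (r x)).mp ?_
        rw [← h3]
        exact hx
      obtain ⟨t, ht⟩ := h6
      refine ⟨t, ?_⟩
      rw [h3, ht, hucu, mul_smul, smul_comm]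
  rw [hset]
  exact key m (cnt m) u₀ r π hπs hker hr c hc N

lemma choose_u (m : ℕ) (L : AddSubgroup (Fin (m+1) → ℤ)) (v : Fin (m+1) → ℤ)
    (hvL : v ∈ L) (hv : v ≠ 0) :
    ∃ u : Fin (m+1) → ℤ, u ≠ 0 ∧ u ∈ L ∧ SatC u L ∧
      (∑ i, ((u i : ℝ))^2) ≤ (∑ i, ((v i : ℝ))^2) := by
  obtain ⟨v₀, d, r, π, hd, hvdv, hπs, hker, hr⟩ := straighten m v hv
  set I0 : AddSubgroup ℤ := AddSubgroup.comap (zmultiplesHom _ v₀) L with hI0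
  set I : Submodule ℤ ℤ := AddSubgroup.toIntSubmodule I0 with hI
  have hmemI : ∀ n : ℤ, n ∈ I ↔ n • v₀ ∈ L := fun n => Iff.rfl
  have hgen := Submodule.IsPrincipal.span_singleton_generator I
  set a := Submodule.IsPrincipal.generator I with ha
  have hdvdI : ∀ n : ℤ, n ∈ I ↔ a ∣ n := by
    intro n
    rw [← hgen, Submodule.mem_span_singleton]
    constructor
    · rintro ⟨e, he⟩; exact ⟨e, by rw [← he, smul_eq_mul, mul_comm]⟩
    · rintro ⟨e, rfl⟩; exact ⟨e, by rw [smul_eq_mul, mul_comm]⟩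
  have hdI : d ∈ I := by rw [hmemI, ← hvdv]; exact hvL
  have hadvd : a ∣ d := (hdvdI d).mp hdI
  have hane : a ≠ 0 := by
    intro h0
    rw [hdvdI, h0] at hdI
    exact hd (zero_dvd_iff.mp hdI)
  have haI : a ∈ I := by rw [← hgen]; exact Submodule.mem_span_singleton_self a
  refine ⟨a • v₀, ?_, (hmemI a).mp haI, ?_, ?_⟩
  · intro h0
    have h1 := congrArg r h0
    rw [map_zsmul, smul_eq_mul, hr, mul_one, map_zero] at h1
    exact hane h1
  · intro x hx n c' hn hnx
    have h1 : n • x = (c' * a) • v₀ := by rw [hnx, mul_smul]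
    have h2 : n * r x = c' * a := by
      have := congrArg r h1
      rwa [map_zsmul, map_zsmul, smul_eq_mul, smul_eq_mul, hr, mul_one] at this
    have h3 : x = r x • v₀ := by
      funext i
      have h4 := congrFun h1 i
      simp only [Pi.smul_apply, smul_eq_mul] at h4 ⊢
      have h5 : n * x i = n * (r x * v₀ i) := by rw [h4, ← h2]; ring
      exact mul_left_cancel₀ hn h5
    have h6 : a ∣ r x := by
      refine (hdvdI (r x)).mp ?_
      rw [hmemI, ← h3]
      exact hx
    obtain ⟨t, ht⟩ := h6
    refine ⟨t, ?_⟩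
    rw [h3, ht, mul_comm, mul_smul]
  · have hterm : ∀ i, (((a • v₀) i : ℝ))^2 ≤ ((v i : ℝ))^2 := by
      intro i
      have hv0 : (v i : ℝ) = (d : ℝ) * ((v₀ i : ℝ)) := by
        rw [hvdv]
        push_cast [Pi.smul_apply, smul_eq_mul]
        ring
      have hu0 : (((a • v₀) i : ℝ)) = (a : ℝ) * ((v₀ i : ℝ)) := by
        push_cast [Pi.smul_apply, smul_eq_mul]
        ring
      have hnat : a.natAbs ≤ d.natAbs :=
        Nat.le_of_dvd (Int.natAbs_pos.2 hd) (Int.natAbs_dvd_natAbs.mpr hadvd)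
      have habs : |(a:ℝ)| ≤ |(d:ℝ)| := by
        rw [← Int.cast_abs, ← Int.cast_abs, Int.abs_eq_natAbs, Int.abs_eq_natAbs]
        exact_mod_cast hnat
      have ha2 : (a:ℝ)^2 ≤ (d:ℝ)^2 := by
        rw [← sq_abs (a:ℝ), ← sq_abs (d:ℝ)]
        exact pow_le_pow_left₀ (abs_nonneg _) habs 2
      rw [hv0, hu0]
      calc ((a:ℝ) * (v₀ i : ℝ))^2 = (a:ℝ)^2 * ((v₀ i:ℝ))^2 := by ring
        _ ≤ (d:ℝ)^2 * ((v₀ i:ℝ))^2 := mul_le_mul_of_nonneg_right ha2 (sq_nonneg _)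
        _ = ((d:ℝ) * (v₀ i : ℝ))^2 := by ring
    exact Finset.sum_le_sum (fun i _ => hterm i)
theorem stmt4 (k : ℕ) (hk : 0 < k) :
    ∃ c : ℝ, ∀ S : ℝ, 1 ≤ S → ∀ T : ℝ, 0 < T →
      ({L : AddSubgroup (Fin k → ℤ) | 0 < L.index ∧ (L.index : ℝ) ≤ T ^ k ∧
          ∃ v ∈ L, v ≠ 0 ∧ Real.sqrt (∑ i, ((v i : ℝ)) ^ 2) ≤ T / S}.ncard : ℝ) ≤
        c * S ^ (-(k : ℤ)) * T ^ (k ^ 2) := by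
  obtain ⟨m, rfl⟩ : ∃ m, k = m + 1 := ⟨k - 1, by omega⟩
  refine ⟨(3:ℝ)^(m+1), ?_⟩
  intro S hS T hT
  have hS0 : 0 < S := lt_of_lt_of_le one_pos hS
  set R : ℝ := T / S with hR
  have hR0 : 0 < R := div_pos hT hS0
  set N : ℕ := ⌊T ^ (m+1)⌋₊ with hN
  set Sset : Set (AddSubgroup (Fin (m+1) → ℤ)) :=
    {L | 0 < L.index ∧ (L.index : ℝ) ≤ T ^ (m+1) ∧
        ∃ v ∈ L, v ≠ 0 ∧ Real.sqrt (∑ i, ((v i : ℝ)) ^ 2) ≤ T / S} with hSset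
  have hz : S ^ (-(((m+1) : ℕ) : ℤ)) = (S ^ (m+1))⁻¹ := by
    rw [zpow_neg, zpow_natCast]
  have hRHS0 : (0:ℝ) ≤ (3:ℝ)^(m+1) * S ^ (-(((m+1) : ℕ) : ℤ)) * T ^ ((m+1) ^ 2) := by
    rw [hz]
    positivity
  -- lower bound on sum of squares for nonzero integer vectors
  have hsum1 : ∀ v : Fin (m+1) → ℤ, v ≠ 0 → (1:ℝ) ≤ ∑ i, ((v i : ℝ))^2 := by
    intro v hv
    obtain ⟨i, hi⟩ : ∃ i, v i ≠ 0 := by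
      by_contra h
      push_neg at h
      exact hv (funext h)
    have h1 : (1:ℤ) ≤ (v i)^2 := by
      have h := Int.one_le_abs hi
      have h2 := sq_abs (v i)
      nlinarith
    have h2 : (1:ℝ) ≤ ((v i : ℝ))^2 := by exact_mod_cast h1
    calc (1:ℝ) ≤ ((v i : ℝ))^2 := h2
      _ ≤ ∑ j, ((v j : ℝ))^2 :=
        Finset.single_le_sum (fun j _ => sq_nonneg ((v j : ℝ))) (Finset.mem_univ i)
  by_cases hR1 : R < 1
  · -- the set is empty
    have hempty : Sset = ∅ := by
      ext L
      simp only [hSset, Set.mem_setOf_eq, Set.mem_empty_iff_false, iff_false]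
      rintro ⟨h1, h2, v, hvL, hv, hsq⟩
      have hs0 : (0:ℝ) ≤ ∑ i, ((v i : ℝ))^2 := Finset.sum_nonneg (fun i _ => sq_nonneg _)
      have h3 : ∑ i, ((v i : ℝ))^2 ≤ R^2 := by
        have := pow_le_pow_left₀ (Real.sqrt_nonneg _) hsq 2
        rwa [Real.sq_sqrt hs0] at this
      have h4 := hsum1 v hv
      nlinarith
    rw [hempty]
    simpa using hRHS0
  push_neg at hR1
  -- covering
  set U : Set (Fin (m+1) → ℤ) := {u | u ≠ 0 ∧ (∑ i, ((u i : ℝ))^2) ≤ R^2} with hU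
  set B : (Fin (m+1) → ℤ) → Set (AddSubgroup (Fin (m+1) → ℤ)) := fun u =>
    {L | 0 < L.index ∧ L.index ≤ N ∧ u ∈ L ∧ SatC u L} with hB
  have hidx : ∀ n : ℕ, ((n:ℝ) ≤ T^(m+1)) ↔ n ≤ N := by
    intro n
    rw [hN, Nat.le_floor_iff (by positivity)]
  have hcov : Sset ⊆ ⋃ u ∈ U, B u := by
    intro L hL
    obtain ⟨h1, h2, v, hvL, hv, hsq⟩ := hL
    have hs0 : (0:ℝ) ≤ ∑ i, ((v i : ℝ))^2 := Finset.sum_nonneg (fun i _ => sq_nonneg _)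
    have h3 : ∑ i, ((v i : ℝ))^2 ≤ R^2 := by
      have := pow_le_pow_left₀ (Real.sqrt_nonneg _) hsq 2
      rwa [Real.sq_sqrt hs0] at this
    obtain ⟨u, hu0, huL, husat, hule⟩ := choose_u m L v hvL hv
    have huU : u ∈ U := ⟨hu0, le_trans hule h3⟩
    have hLB : L ∈ B u := ⟨h1, (hidx _).mp h2, huL, husat⟩
    exact Set.mem_biUnion huU hLB
  -- U is contained in a box
  set box : Finset (Fin (m+1) → ℤ) :=
    Fintype.piFinset (fun _ : Fin (m+1) => Finset.Icc (-⌊R⌋) ⌊R⌋) with hbox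
  have hUbox : U ⊆ ↑box := by
    intro u hu
    obtain ⟨hu0, husum⟩ := hu
    rw [Finset.mem_coe, Fintype.mem_piFinset]
    intro i
    have h5 : ((u i : ℝ))^2 ≤ R^2 :=
      le_trans (Finset.single_le_sum (fun j _ => sq_nonneg ((u j : ℝ))) (Finset.mem_univ i)) husum
    have h6 : |(u i : ℝ)| ≤ R := by
      have := abs_nonneg ((u i : ℝ))
      nlinarith [sq_abs ((u i : ℝ))]
    rw [Finset.mem_Icc]
    constructor
    · have h7 : ((-(u i) : ℤ) : ℝ) ≤ R := by
        push_cast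
        linarith [neg_abs_le ((u i : ℝ))]
      have := Int.le_floor.mpr h7
      omega
    · exact Int.le_floor.mpr (le_of_abs_le h6)
  have hUfin : U.Finite := Set.Finite.subset (box.finite_toSet) hUbox
  obtain ⟨hSfin, hScard⟩ := cover_ncard hUfin hcov
    (fun u hu => (countB m u hu.1 N).1)
    (fun u hu => (countB m u hu.1 N).2)
  refine hScard.trans ?_
  -- bound U.ncard
  have hfl1 : (1:ℤ) ≤ ⌊R⌋ := by
    rw [Int.le_floor]
    exact_mod_cast hR1
  have hboxcard : (box.card : ℝ) ≤ (3*R)^(m+1) := by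
    rw [hbox, Fintype.card_piFinset]
    have h8 : ∀ i : Fin (m+1), ((Finset.Icc (-⌊R⌋) ⌊R⌋).card : ℝ) ≤ 3*R := by
      intro i
      rw [Int.card_Icc]
      rw [show ⌊R⌋ + 1 - -⌊R⌋ = 2*⌊R⌋+1 from by ring]
      have hnn : (0:ℤ) ≤ 2*⌊R⌋+1 := by omega
      have h10 : ((2*⌊R⌋+1).toNat : ℤ) = 2*⌊R⌋+1 := Int.toNat_of_nonneg hnn
      have h11 : ((2*⌊R⌋+1).toNat : ℝ) = 2*((⌊R⌋:ℤ):ℝ)+1 := by exact_mod_cast h10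
      rw [h11]
      have := Int.floor_le R
      linarith
    calc ((∏ _i : Fin (m+1), (Finset.Icc (-⌊R⌋) ⌊R⌋).card : ℕ) : ℝ)
        = ∏ _i : Fin (m+1), ((Finset.Icc (-⌊R⌋) ⌊R⌋).card : ℝ) := by push_cast; rfl
      _ ≤ ∏ _i : Fin (m+1), (3*R) := by
          apply Finset.prod_le_prod (fun i _ => by positivity) (fun i _ => h8 i)
      _ = (3*R)^(m+1) := by rw [Finset.prod_const]; simp
  have hUcard : ((U.ncard : ℝ)) ≤ (3*R)^(m+1) := by
    have := Set.ncard_le_ncard hUbox (box.finite_toSet)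
    rw [Set.ncard_coe_finset] at this
    exact le_trans (by exact_mod_cast this) hboxcard
  have hNle : ((N:ℝ)) ≤ T^(m+1) := by
    rw [hN]
    exact Nat.floor_le (by positivity)
  have hNm : ((N:ℝ))^m ≤ (T^(m+1))^m := pow_le_pow_left₀ (by positivity) hNle m
  calc ((U.ncard : ℝ)) * ((N:ℝ))^m ≤ (3*R)^(m+1) * (T^(m+1))^m := by
        apply mul_le_mul hUcard hNm (by positivity) (by positivity)
    _ = (3:ℝ)^(m+1) * S ^ (-(((m+1) : ℕ) : ℤ)) * T ^ ((m+1) ^ 2) := by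
        rw [hz, hR]
        rw [← pow_mul]
        rw [show (m+1)^2 = (m+1) + (m+1)*m by ring, pow_add]
        field_simp
        have hSm : S^m * S⁻¹^m = 1 := by rw [← mul_pow, mul_inv_cancel₀ hS0.ne', one_pow]
        linear_combination (T * T ^ (m * 2) * T ^ m ^ 2 * S * 3 ^ m * 3) * hSm
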